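/- Let G be a large scale group, K a bounded symmetric subset of G with 1 ∈ K, and B a bounded subset of G such that G \ B has exactly two K-components L and R, both of which are unbounded, and G acts trivially on L and on R (i.e. for every g ∈ G the symmetric differences L Δ (g·L) and R Δ (g·R) are bounded). Assume moreover that either (1) B is K-connected, or (2) B ⊆ h·Kⁿ for some h ∈ G and n ≥ 1. Then G has a cyclic subgroup of bounded index: there exist g ∈ G and a bounded subset C of G with C·⟨g⟩ = G. -/

import Mathlib

open Set Pointwise

/-- One step of a `K`-chain inside the set `A`. -/
def KStep {G : Type*} [Group G] (K A : Set G) (x y : G) : Prop :=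
  x ∈ A ∧ y ∈ A ∧ x⁻¹ * y ∈ K

/-- `x` and `y` are joined by a `K`-chain inside `A`. -/
def KConn {G : Type*} [Group G] (K A : Set G) (x y : G) : Prop :=
  Relation.ReflTransGen (KStep K A) x y

section Aux

variable {G : Type*} [Group G] {K A A' B L R : Set G}

private lemma aux_one_mem_spow (hK1 : (1:G) ∈ K) : ∀ n : ℕ, (1:G) ∈ K ^ n := by
  intro n
  induction n with
  | zero => rw [pow_zero]; exact Set.mem_one.mpr rfl
  | succ n ih => rw [pow_succ]; simpa using Set.mul_mem_mul ih hK1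

private lemma aux_spow_mono (hK1 : (1:G) ∈ K) {m n : ℕ} (h : m ≤ n) : K ^ m ⊆ K ^ n := by
  induction n with
  | zero => simpa [Nat.le_zero.mp h] using subset_rfl
  | succ n ih =>
    rcases Nat.lt_or_ge m (n+1) with h' | h'
    · intro w hw
      rw [pow_succ]
      simpa using Set.mul_mem_mul (ih (by omega) hw) hK1
    · have : m = n + 1 := by omega
      subst this; exact subset_rfl

private lemma aux_inv_mem_spow (hKsymm : K⁻¹ = K) :
    ∀ n : ℕ, ∀ w ∈ K ^ n, w⁻¹ ∈ K ^ n := by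
  intro n
  induction n with
  | zero =>
    intro w hw
    rw [pow_zero] at *
    rcases Set.mem_one.mp hw with rfl
    simpa using Set.mem_one.mpr rfl
  | succ n ih =>
    intro w hw
    rw [pow_succ] at hw
    obtain ⟨a, ha, k, hk, rfl⟩ := Set.mem_mul.mp hw
    have hk' : k⁻¹ ∈ K := by rw [← hKsymm]; simpa using hk
    have ha' := ih a ha
    have : (a * k)⁻¹ = k⁻¹ * a⁻¹ := by rw [mul_inv_rev]
    rw [this, pow_succ']
    exact Set.mul_mem_mul hk' ha'

private lemma aux_kconn_mono (h : A ⊆ A') {x y : G} (hc : KConn K A x y) : KConn K A' x y :=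
  Relation.ReflTransGen.mono (fun a b hab => ⟨h hab.1, h hab.2.1, hab.2.2⟩) _ _ hc

private lemma aux_kconn_symm (hKsymm : K⁻¹ = K) : Symmetric (KConn K A) :=
  fun x y hxy => by
  haveI : Std.Symm (KStep K A) := ⟨fun a b hab => ⟨hab.2.1, hab.1, by
    rw [← hKsymm]
    simpa [mul_inv_rev] using hab.2.2⟩⟩
  exact Std.Symm.symm (r := Relation.ReflTransGen (KStep K A)) _ _ hxy

private lemma aux_kconn_smul (a : G) {x y : G} (hc : KConn K A x y) :
    KConn K (a • A) (a * x) (a * y) := by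
  refine Relation.ReflTransGen.lift (fun z => a * z) (fun p q hpq => ?_) _ _ hc
  exact ⟨Set.smul_mem_smul_set hpq.1, Set.smul_mem_smul_set hpq.2.1, by
    simpa [mul_inv_rev, mul_assoc] using hpq.2.2⟩

private lemma aux_kconn_to_word {x y : G} (hc : KConn K A x y) : ∃ n : ℕ, x⁻¹ * y ∈ K ^ n := by
  induction hc with
  | refl => exact ⟨0, by simp [pow_zero, Set.mem_one]⟩
  | @tail b c hxb hbc ih =>
    obtain ⟨n, hn⟩ := ih
    refine ⟨n+1, ?_⟩
    have he : x⁻¹ * c = (x⁻¹ * b) * (b⁻¹ * c) := by rw [mul_assoc, mul_inv_cancel_left]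
    rw [pow_succ, he]
    exact Set.mul_mem_mul hn hbc.2.2

/-- no single `K`-step from `L` to `R`. -/
private lemma aux_no_cross_LR (hLR : L ∪ R = Bᶜ)
    (hsep : ∀ x ∈ L, ∀ y ∈ R, ¬ KConn K Bᶜ x y)
    {z k : G} (hz : z ∈ L) (hk : k ∈ K) (hzk : z * k ∈ R) : False := by
  refine hsep z hz (z * k) hzk (Relation.ReflTransGen.single ?_)
  refine ⟨?_, ?_, by simpa using hk⟩
  · rw [← hLR]; exact Or.inl hz
  · rw [← hLR]; exact Or.inr hzk

/-- no single `K`-step from `R` to `L` (uses symmetry of `K`). -/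
private lemma aux_no_cross_RL (hLR : L ∪ R = Bᶜ) (hKsymm : K⁻¹ = K)
    (hsep : ∀ x ∈ L, ∀ y ∈ R, ¬ KConn K Bᶜ x y)
    {z k : G} (hz : z ∈ R) (hk : k ∈ K) (hzk : z * k ∈ L) : False := by
  refine hsep (z * k) hzk z hz (Relation.ReflTransGen.single ?_)
  refine ⟨?_, ?_, ?_⟩
  · rw [← hLR]; exact Or.inl hzk
  · rw [← hLR]; exact Or.inr hz
  · have : (z * k)⁻¹ * z = k⁻¹ := by
      rw [mul_inv_rev, mul_assoc, inv_mul_cancel, mul_one]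
    rw [this, ← hKsymm]
    simpa using hk

/-- decompose a `K^n` word into a chain of positions. -/
private lemma aux_word_seq :
    ∀ (n : ℕ) (w : G), w ∈ K ^ n → ∀ x : G,
      ∃ p : ℕ → G, p 0 = x ∧ p n = x * w ∧ ∀ i < n, (p i)⁻¹ * p (i+1) ∈ K := by
  intro n
  induction n with
  | zero =>
    intro w hw x
    rw [pow_zero] at hw
    rcases Set.mem_one.mp hw with rfl
    exact ⟨fun _ => x, rfl, by simp, by intro i hi; omega⟩
  | succ n ih =>
    intro w hw x
    rw [pow_succ] at hw
    obtain ⟨w', hw', k, hk, rfl⟩ := Set.mem_mul.mp hw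
    obtain ⟨p, hp0, hpn, hstep⟩ := ih w' hw' x
    refine ⟨fun i => if i ≤ n then p i else x * (w' * k), by simpa using hp0, by simp, ?_⟩
    intro i hi
    rcases Nat.lt_or_ge i n with h' | h'
    · simpa [Nat.le_of_lt h', Nat.succ_le_of_lt h'] using hstep i h'
    · have hin : i = n := by omega
      subst hin
      simp only [le_refl, if_pos, Nat.lt_irrefl, if_neg (by omega : ¬ i + 1 ≤ i)]
      rw [hpn, ← mul_assoc]
      simpa [mul_inv_rev, mul_assoc] using hk

/-- discrete intermediate value: a chain starting in `S` and ending outside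
    has an exit step. -/
private lemma aux_ivt_seq :
    ∀ (T : ℕ) (p : ℕ → G) (S : Set G), p 0 ∈ S → p T ∉ S →
      ∃ i, i < T ∧ p i ∈ S ∧ p (i+1) ∉ S := by
  intro T
  induction T with
  | zero => intro p S h0 hT; exact absurd h0 hT
  | succ T ih =>
    intro p S h0 hT
    by_cases hpT : p T ∈ S
    · exact ⟨T, Nat.lt_succ_self T, hpT, hT⟩
    · obtain ⟨i, hi, h1, h2⟩ := ih p S h0 hpT
      exact ⟨i, by omega, h1, h2⟩

/-- a word chain from `x` stays in `x • K^n`. -/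
private lemma aux_kconn_prefix (hK1 : (1:G) ∈ K) :
    ∀ (n : ℕ) (w : G), w ∈ K ^ n → ∀ x : G, KConn K (x • K ^ n) x (x * w) := by
  intro n
  induction n with
  | zero =>
    intro w hw x
    rw [pow_zero] at hw
    rcases Set.mem_one.mp hw with rfl
    rw [mul_one]
    exact Relation.ReflTransGen.refl
  | succ n ih =>
    intro w hw x
    rw [pow_succ] at hw
    obtain ⟨w', hw', k, hk, rfl⟩ := Set.mem_mul.mp hw
    have ihc : KConn K (x • K ^ n) x (x * w') := ih w' hw' x
    have step : KStep K (x • K ^ (n+1)) (x * w') (x * (w' * k)) := by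
      refine ⟨?_, ?_, by simpa [mul_inv_rev, mul_assoc] using hk⟩
      · exact Set.smul_mem_smul_set (aux_spow_mono hK1 (Nat.le_succ n) hw')
      · exact Set.smul_mem_smul_set (by rw [pow_succ]; exact Set.mul_mem_mul hw' hk)
    exact Relation.ReflTransGen.tail
      (aux_kconn_mono (Set.smul_set_mono (aux_spow_mono hK1 (Nat.le_succ n))) ihc) step

/-- a chain in `Bᶜ` starting in `R` stays in `R`. -/
private lemma aux_stay_R (hLR : L ∪ R = Bᶜ) (hKsymm : K⁻¹ = K)
    (hsep : ∀ x ∈ L, ∀ y ∈ R, ¬ KConn K Bᶜ x y)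
    {x y : G} (hc : KConn K Bᶜ x y) (hx : x ∈ R) : KConn K R x y ∧ y ∈ R := by
  induction hc with
  | refl => exact ⟨Relation.ReflTransGen.refl, hx⟩
  | @tail b c hxb hbc ih =>
    obtain ⟨hchain, hbR⟩ := ih
    have hcR : c ∈ R := by
      have hcBc : c ∈ L ∪ R := by rw [hLR]; exact hbc.2.1
      rcases hcBc with hcL | hcR
      · exact (aux_no_cross_RL hLR hKsymm hsep hbR hbc.2.2
          (by rwa [mul_inv_cancel_left])).elim
      · exact hcR
    exact ⟨Relation.ReflTransGen.tail hchain ⟨hbR, hcR, hbc.2.2⟩, hcR⟩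

/-- finding the first entrance into `B` along a chain from `R`. -/
private lemma aux_anchor (hLR : L ∪ R = Bᶜ) (hKsymm : K⁻¹ = K)
    (hsep : ∀ x ∈ L, ∀ y ∈ R, ¬ KConn K Bᶜ x y) :
    ∀ (T : ℕ) (p : ℕ → G), p 0 ∈ R → p T ∈ B → (∀ i < T, (p i)⁻¹ * p (i+1) ∈ K) →
      ∃ a b : G, a ∈ R ∧ b ∈ B ∧ a⁻¹ * b ∈ K := by
  intro T
  induction T with
  | zero =>
    intro p h0 hT _
    have : p 0 ∈ Bᶜ := by rw [← hLR]; exact Or.inr h0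
    exact absurd hT this
  | succ T ih =>
    intro p h0 hT hstep
    by_cases h1 : p 1 ∈ B
    · exact ⟨p 0, p 1, h0, h1, hstep 0 (Nat.succ_pos T)⟩
    · have h1c : p 1 ∈ L ∪ R := by rw [hLR]; exact h1
      rcases h1c with h1L | h1R
      · exact (aux_no_cross_RL hLR hKsymm hsep h0
          (hstep 0 (Nat.succ_pos T)) (by rwa [mul_inv_cancel_left])).elim
      · exact ih (fun i => p (i+1)) h1R hT (fun i hi => hstep (i+1) (by omega))

end Aux

theorem two_components_cyclic_bounded_index {G : Type*} [Group G] (ℬ : Set (Set G))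
    (hsingle : ∀ g : G, {g} ∈ ℬ)
    (hsubset : ∀ S T : Set G, S ⊆ T → T ∈ ℬ → S ∈ ℬ)
    (hunion : ∀ S ∈ ℬ, ∀ T ∈ ℬ, S ∪ T ∈ ℬ)
    (hmul : ∀ S ∈ ℬ, ∀ T ∈ ℬ, S * T ∈ ℬ)
    (hinv : ∀ S ∈ ℬ, S⁻¹ ∈ ℬ)
    (K : Set G) (hK : K ∈ ℬ) (hKsymm : K⁻¹ = K) (hK1 : (1 : G) ∈ K)
    (B : Set G) (hB : B ∈ ℬ)
    (L R : Set G)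
    (hLR : L ∪ R = Bᶜ) (hdisj : Disjoint L R)
    (hLconn : ∀ x ∈ L, ∀ y ∈ L, KConn K Bᶜ x y)
    (hRconn : ∀ x ∈ R, ∀ y ∈ R, KConn K Bᶜ x y)
    (hsep : ∀ x ∈ L, ∀ y ∈ R, ¬ KConn K Bᶜ x y)
    (hLunb : L ∉ ℬ) (hRunb : R ∉ ℬ)
    (htrivL : ∀ g : G, (L \ (g • L)) ∪ ((g • L) \ L) ∈ ℬ)
    (htrivR : ∀ g : G, (R \ (g • R)) ∪ ((g • R) \ R) ∈ ℬ)
    (hcond : (∀ x ∈ B, ∀ y ∈ B, KConn K B x y) ∨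
      ∃ h : G, ∃ n : ℕ, 1 ≤ n ∧ B ⊆ h • (K ^ n)) :
    ∃ g : G, ∃ C ∈ ℬ, C * ((Subgroup.zpowers g : Subgroup G) : Set G) = Set.univ := by
  classical
  -- elementary facts
  have hLB : ∀ z, z ∈ L → z ∈ B → False := by
    intro z hz hB'
    have : z ∈ Bᶜ := by rw [← hLR]; exact Or.inl hz
    exact this hB'
  have hRB : ∀ z, z ∈ R → z ∈ B → False := by
    intro z hz hB'
    have : z ∈ Bᶜ := by rw [← hLR]; exact Or.inr hz
    exact this hB'
  have hLRf : ∀ z, z ∈ L → z ∈ R → False := fun z hz hz' => Set.disjoint_left.mp hdisj hz hz'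
  have htri : ∀ z : G, z ∈ B ∨ z ∈ L ∨ z ∈ R := by
    intro z
    by_cases hzB : z ∈ B
    · exact Or.inl hzB
    · have : z ∈ L ∪ R := by rw [hLR]; exact hzB
      exact Or.inr this
  have hKpow : ∀ n : ℕ, K ^ n ∈ ℬ := by
    intro n
    induction n with
    | zero => rw [pow_zero]; exact hsubset _ {1} (fun x hx => hx) (hsingle 1)
    | succ n ih => rw [pow_succ]; exact hmul _ ih _ hK
  have hempty : (∅ : Set G) ∈ ℬ := hsubset _ {1} (by simp) (hsingle 1)
  have hLne : L.Nonempty := by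
    by_contra h
    rw [Set.not_nonempty_iff_eq_empty] at h
    exact hLunb (h ▸ hempty)
  have hRne : R.Nonempty := by
    by_contra h
    rw [Set.not_nonempty_iff_eq_empty] at h
    exact hRunb (h ▸ hempty)
  obtain ⟨x₀, hx₀⟩ := hLne
  obtain ⟨y₀, hy₀⟩ := hRne
  -- the subgroup generated by K is everything
  have hKn_subH : ∀ n : ℕ, ∀ w ∈ K ^ n, w ∈ Subgroup.closure K := by
    intro n
    induction n with
    | zero =>
      intro w hw
      rw [pow_zero] at hw
      rcases Set.mem_one.mp hw with rfl
      exact one_mem _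
    | succ n ih =>
      intro w hw
      rw [pow_succ] at hw
      obtain ⟨a, ha, k, hk, rfl⟩ := Set.mem_mul.mp hw
      exact mul_mem (ih a ha) (Subgroup.subset_closure hk)
  have hLH : ∀ y ∈ L, x₀⁻¹ * y ∈ Subgroup.closure K := by
    intro y hy
    obtain ⟨n, hn⟩ := aux_kconn_to_word (hLconn x₀ hx₀ y hy)
    exact hKn_subH n _ hn
  have hconj : ∀ z : G, x₀⁻¹ * z * x₀ ∈ Subgroup.closure K := by
    intro z
    by_contra hz
    have hdisj2 : ∀ y ∈ L, y ∉ z • L := by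
      intro y hy hyz
      obtain ⟨l, hl, hlz⟩ := hyz
      apply hz
      have h1 := hLH y hy
      have h2 := hLH l hl
      have heq : x₀⁻¹ * z * x₀ = (x₀⁻¹ * y) * (x₀⁻¹ * l)⁻¹ := by
        rw [← hlz]; simp only [smul_eq_mul]; group
      rw [heq]
      exact mul_mem h1 (inv_mem h2)
    exact hLunb (hsubset _ _ (fun y hy => Or.inl ⟨hy, hdisj2 y hy⟩) (htrivL z))
  have hHtop : ∀ w : G, w ∈ Subgroup.closure K := by
    intro w
    have h1 := hconj (x₀ * w * x₀⁻¹)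
    have h2 : x₀⁻¹ * (x₀ * w * x₀⁻¹) * x₀ = w := by group
    rwa [h2] at h1
  have hword : ∀ w : G, ∃ n : ℕ, w ∈ K ^ n := by
    intro w
    induction hHtop w using Subgroup.closure_induction with
    | mem k hk => exact ⟨1, by rwa [pow_one]⟩
    | one => exact ⟨0, by simp [pow_zero, Set.mem_one]⟩
    | mul a b ha hb iha ihb =>
      obtain ⟨m, hm⟩ := iha; obtain ⟨n, hn⟩ := ihb
      exact ⟨m + n, by rw [pow_add]; exact Set.mul_mem_mul hm hn⟩
    | inv a ha iha =>
      obtain ⟨m, hm⟩ := iha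
      exact ⟨m, aux_inv_mem_spow hKsymm m a hm⟩
  -- B is nonempty
  have hBne : B.Nonempty := by
    by_contra hBe
    rw [Set.not_nonempty_iff_eq_empty] at hBe
    obtain ⟨T, hT⟩ := hword (x₀⁻¹ * y₀)
    have hc : KConn K (x₀ • K ^ T) x₀ (x₀ * (x₀⁻¹ * y₀)) := aux_kconn_prefix hK1 T _ hT x₀
    rw [mul_inv_cancel_left] at hc
    have hc2 : KConn K Bᶜ x₀ y₀ := aux_kconn_mono (by rw [hBe]; intro z _; simp) hc
    exact hsep x₀ hx₀ y₀ hy₀ hc2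
  -- anchor: a point of R one K-step from B
  have hanchor : ∃ a b : G, a ∈ R ∧ b ∈ B ∧ a⁻¹ * b ∈ K := by
    obtain ⟨b₀, hb₀⟩ := hBne
    obtain ⟨T, hT⟩ := hword (y₀⁻¹ * b₀)
    obtain ⟨p, hp0, hpT, hstep⟩ := aux_word_seq T _ hT y₀
    rw [mul_inv_cancel_left] at hpT
    exact aux_anchor hLR hKsymm hsep T p (hp0 ▸ hy₀) (hpT ▸ hb₀) hstep
  obtain ⟨aR, bR, haR, hbR, hkaR⟩ := hanchor
  -- the connected enlargement B̂ of B touching R at aR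
  have hsmul_mul : ∀ (a : G) (s : Set G), a • s = {a} * s := by
    intro a s
    ext z
    constructor
    · rintro ⟨y, hy, rfl⟩
      exact Set.mem_mul.mpr ⟨a, rfl, y, hy, rfl⟩
    · rintro ⟨c, hc, y, hy, rfl⟩
      rcases hc with rfl
      exact Set.smul_mem_smul_set hy
  obtain ⟨Bh, hBhB, hBBh, haRBh, hBhconn⟩ :
      ∃ Bh : Set G, Bh ∈ ℬ ∧ B ⊆ Bh ∧ aR ∈ Bh ∧
        (∀ p ∈ Bh, ∀ q ∈ Bh, KConn K Bh p q) := by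
    rcases hcond with hc1 | ⟨h, n, _, hc2⟩
    · refine ⟨B ∪ {aR}, hunion _ hB _ (hsingle aR), Set.subset_union_left, Or.inr rfl, ?_⟩
      have hbR' : bR ∈ B ∪ {aR} := Or.inl hbR
      have haR' : aR ∈ B ∪ {aR} := Or.inr rfl
      have hconn_to : ∀ p ∈ B ∪ {aR}, KConn K (B ∪ {aR}) p bR := by
        intro p hp
        rcases hp with hpB | hpa
        · exact aux_kconn_mono Set.subset_union_left (hc1 p hpB bR hbR)
        · have hpa' : p = aR := hpa
          rw [hpa']
          exact Relation.ReflTransGen.single ⟨haR', hbR', hkaR⟩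
      intro p hp q hq
      exact (hconn_to p hp).trans (aux_kconn_symm hKsymm (hconn_to q hq))
    · refine ⟨(h • K ^ n) ∪ {aR}, ?_, fun b hb => Or.inl (hc2 hb), Or.inr rfl, ?_⟩
      · refine hunion _ ?_ _ (hsingle aR)
        rw [hsmul_mul]
        exact hmul _ (hsingle h) _ (hKpow n)
      · have hbRh : bR ∈ h • K ^ n := hc2 hbR
        have hconn_to : ∀ p ∈ (h • K ^ n) ∪ {aR}, KConn K ((h • K ^ n) ∪ {aR}) p h := by
          intro p hp
          rcases hp with hpB | hpa
          · obtain ⟨w, hw, rfl⟩ := hpB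
            exact aux_kconn_symm hKsymm
              (aux_kconn_mono Set.subset_union_left (aux_kconn_prefix hK1 n w hw h))
          · have hpa' : p = aR := hpa
            rw [hpa']
            obtain ⟨w, hw, hbw⟩ := hbRh
            have hstep1 : KStep K ((h • K ^ n) ∪ {aR}) aR bR :=
              ⟨Or.inr rfl, Or.inl (hc2 hbR), hkaR⟩
            have hc3 : KConn K ((h • K ^ n) ∪ {aR}) bR h := by
              rw [← hbw]
              exact aux_kconn_symm hKsymm
                (aux_kconn_mono Set.subset_union_left (aux_kconn_prefix hK1 n w hw h))
            exact Relation.ReflTransGen.trans (Relation.ReflTransGen.single hstep1) hc3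
        intro p hp q hq
        exact (hconn_to p hp).trans (aux_kconn_symm hKsymm (hconn_to q hq))
  -- R ∪ B̂ is K-connected
  have hRBconn : ∀ p ∈ R ∪ Bh, ∀ q ∈ R ∪ Bh, KConn K (R ∪ Bh) p q := by
    have hconn_to : ∀ p ∈ R ∪ Bh, KConn K (R ∪ Bh) p aR := by
      intro p hp
      rcases hp with hpR | hpB
      · exact aux_kconn_mono Set.subset_union_left
          (aux_stay_R hLR hKsymm hsep (hRconn p hpR aR haR) hpR).1
      · exact aux_kconn_mono Set.subset_union_right (hBhconn p hpB aR haRBh)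
    intro p hp q hq
    exact (hconn_to p hp).trans (aux_kconn_symm hKsymm (hconn_to q hq))
  -- choose a deep point x ∈ L and set g := x * aR⁻¹
  have hW : ((B ∪ Bh) * Bh⁻¹) * {aR} ∈ ℬ :=
    hmul _ (hmul _ (hunion _ hB _ hBhB) _ (hinv _ hBhB)) _ (hsingle aR)
  obtain ⟨x, hxL, hxW⟩ : ∃ x ∈ L, x ∉ ((B ∪ Bh) * Bh⁻¹) * {aR} := by
    by_contra h
    push_neg at h
    exact hLunb (hsubset _ _ h hW)
  set g := x * aR⁻¹ with hgdef
  have hgaR : g * aR = x := by rw [hgdef, inv_mul_cancel_right]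
  have hgBh : ∀ b ∈ Bh, g * b ∉ B ∪ Bh := by
    intro b hb hmem
    apply hxW
    rw [← hgaR]
    refine Set.mem_mul.mpr ⟨g * b * b⁻¹, ?_, aR, rfl, by rw [mul_inv_cancel_right]⟩
    exact Set.mem_mul.mpr ⟨g * b, hmem, b⁻¹, by simpa using hb, rfl⟩
  have hgBhL : ∀ b ∈ Bh, g * b ∈ L := by
    intro b hb
    have hnB : g * b ∉ B := fun hB' => hgBh b hb (Or.inl hB')
    have hLoR : g * b ∈ L ∪ R := by rw [hLR]; exact hnB
    rcases hLoR with h | h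
    · exact h
    · exfalso
      have hchain : KConn K Bh aR b := hBhconn aR haRBh b hb
      have hchain2 : KConn K (g • Bh) (g * aR) (g * b) := aux_kconn_smul g hchain
      have hchain3 : KConn K Bᶜ (g * aR) (g * b) := by
        refine aux_kconn_mono ?_ hchain2
        rintro z ⟨b', hb', rfl⟩
        exact fun hzB => hgBh b' hb' (Or.inl hzB)
      rw [hgaR] at hchain3
      exact hsep x hxL (g * b) h hchain3
  -- orientation: R ∪ B̂ ⊆ g • R
  have hgBnotmem : ∀ q ∈ R ∪ Bh, q ∉ g • B := by
    rintro q hq ⟨b, hbB, rfl⟩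
    have hL' : g • b ∈ L := by simpa using hgBhL b (hBBh hbB)
    rcases hq with hqR | hqB
    · exact hLRf _ hL' hqR
    · exact hgBh b (hBBh hbB) (Or.inr (by simpa using hqB))
  have hside : ∀ q ∈ R ∪ Bh, q ∈ g • L ∨ q ∈ g • R := by
    intro q hq
    rcases htri (g⁻¹ * q) with h | h | h
    · exact absurd (⟨g⁻¹ * q, h, by simp⟩ : q ∈ g • B) (hgBnotmem q hq)
    · exact Or.inl ⟨g⁻¹ * q, h, by simp⟩
    · exact Or.inr ⟨g⁻¹ * q, h, by simp⟩
  have hRBgR : ∀ q ∈ R ∪ Bh, q ∈ g • R := by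
    have hcompl : (g • B)ᶜ = g • Bᶜ := by
      ext z
      simp [Set.mem_smul_set_iff_inv_smul_mem]
    by_cases hex : ∃ p ∈ R ∪ Bh, p ∈ g • L
    · exfalso
      obtain ⟨p, hpRB, hpgL⟩ := hex
      have hall : ∀ q ∈ R ∪ Bh, q ∈ g • L := by
        intro q hq
        rcases hside q hq with h | h
        · exact h
        · exfalso
          have hc := hRBconn p hpRB q hq
          have hc2 : KConn K ((g • B)ᶜ) p q :=
            aux_kconn_mono (fun z hz => hgBnotmem z hz) hc
          rw [hcompl] at hc2
          have hc3 : KConn K (g⁻¹ • g • Bᶜ) (g⁻¹ * p) (g⁻¹ * q) := aux_kconn_smul g⁻¹ hc2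
          rw [inv_smul_smul] at hc3
          have hpL : g⁻¹ * p ∈ L := by
            have := Set.mem_smul_set_iff_inv_smul_mem.mp hpgL
            simpa using this
          have hqR : g⁻¹ * q ∈ R := by
            have := Set.mem_smul_set_iff_inv_smul_mem.mp h
            simpa using this
          exact hsep _ hpL _ hqR hc3
      have hsub : R ⊆ (R \ (g • R)) ∪ ((g • R) \ R) := by
        intro w hw
        refine Or.inl ⟨hw, fun hwgR => ?_⟩
        have hwgL := hall w (Or.inl hw)
        have h1 : g⁻¹ * w ∈ L := by
          have := Set.mem_smul_set_iff_inv_smul_mem.mp hwgL; simpa using this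
        have h2 : g⁻¹ * w ∈ R := by
          have := Set.mem_smul_set_iff_inv_smul_mem.mp hwgR; simpa using this
        exact hLRf _ h1 h2
      exact hRunb (hsubset _ _ hsub (htrivR g))
    · push_neg at hex
      intro q hq
      rcases hside q hq with h | h
      · exact absurd h (hex q hq)
      · exact h
  -- nesting
  have hnestL : ∀ w ∈ L ∪ B, g * w ∈ L := by
    intro w hw
    rcases htri (g * w) with h | h | h
    · exfalso
      have := hRBgR (g * w) (Or.inr (hBBh h))
      have hwR : w ∈ R := by
        have h2 := Set.mem_smul_set_iff_inv_smul_mem.mp this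
        simpa using h2
      rcases hw with hwL | hwB
      · exact hLRf _ hwL hwR
      · exact hRB _ hwR hwB
    · exact h
    · exfalso
      have := hRBgR (g * w) (Or.inl h)
      have hwR : w ∈ R := by
        have h2 := Set.mem_smul_set_iff_inv_smul_mem.mp this
        simpa using h2
      rcases hw with hwL | hwB
      · exact hLRf _ hwL hwR
      · exact hRB _ hwR hwB
  have hnestR : ∀ w ∈ R ∪ B, g⁻¹ * w ∈ R := by
    intro w hw
    have hw' : w ∈ R ∪ Bh := by
      rcases hw with h | h
      · exact Or.inl h
      · exact Or.inr (hBBh h)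
    have := hRBgR w hw'
    have h2 := Set.mem_smul_set_iff_inv_smul_mem.mp this
    simpa using h2
  -- iterates
  have hiterL : ∀ m : ℕ, 1 ≤ m → ∀ w ∈ L ∪ B, g ^ m * w ∈ L := by
    intro m hm
    induction m with
    | zero => omega
    | succ m ih =>
      intro w hw
      rcases Nat.eq_zero_or_pos m with h0 | hpos
      · subst h0; simpa using hnestL w hw
      · have h1 : g ^ m * w ∈ L := ih hpos w hw
        have h2 : g * (g ^ m * w) ∈ L := hnestL _ (Or.inl h1)
        rw [pow_succ', mul_assoc]
        exact h2
  have hiterR : ∀ m : ℕ, 1 ≤ m → ∀ w ∈ R ∪ B, (g⁻¹) ^ m * w ∈ R := by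
    intro m hm
    induction m with
    | zero => omega
    | succ m ih =>
      intro w hw
      rcases Nat.eq_zero_or_pos m with h0 | hpos
      · subst h0; simpa using hnestR w hw
      · have h1 : (g⁻¹) ^ m * w ∈ R := ih hpos w hw
        have h2 : g⁻¹ * ((g⁻¹) ^ m * w) ∈ R := hnestR _ (Or.inl h1)
        rw [pow_succ', mul_assoc]
        exact h2
  have hiterLZ : ∀ m : ℤ, 1 ≤ m → ∀ w ∈ L ∪ B, g ^ m * w ∈ L := by
    intro m hm w hw
    have hnn : (0:ℤ) ≤ m := by omega
    have h1 : g ^ m = g ^ (m.toNat) := by rw [← zpow_natCast, Int.toNat_of_nonneg hnn]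
    rw [h1]
    exact hiterL m.toNat (by omega) w hw
  have hiterRZ : ∀ m : ℤ, m ≤ -1 → ∀ w ∈ R ∪ B, g ^ m * w ∈ R := by
    intro m hm w hw
    have h1 : g ^ m = (g⁻¹) ^ ((-m).toNat) := by
      rw [← zpow_natCast, Int.toNat_of_nonneg (by omega : (0:ℤ) ≤ -m), inv_zpow, ← zpow_neg,
        neg_neg]
    rw [h1]
    exact hiterR (-m).toNat (by omega) w hw
  -- membership characterization
  have hmem : ∀ (j : ℤ) (S : Set G) (z : G), z ∈ g ^ j • S ↔ g ^ (-j) * z ∈ S := by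
    intro j S z
    rw [Set.mem_smul_set_iff_inv_smul_mem, ← zpow_neg, smul_eq_mul]
  -- walls are pairwise disjoint
  have hwall : ∀ i j : ℤ, i < j → ∀ z, z ∈ g ^ i • B → z ∈ g ^ j • B → False := by
    intro i j hij z hzi hzj
    have h1 : g ^ (-i) * z ∈ B := (hmem i B z).mp hzi
    have h2 : g ^ (-j) * z ∈ B := (hmem j B z).mp hzj
    have heq : g ^ (-i) * z = g ^ (j - i) * (g ^ (-j) * z) := by
      rw [← mul_assoc, ← zpow_add]
      congr 2
      omega
    have h3 : g ^ (j - i) * (g ^ (-j) * z) ∈ L :=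
      hiterLZ (j - i) (by omega) _ (Or.inr h2)
    rw [← heq] at h3
    exact hLB _ h3 h1
  -- exit lemmas
  have hexitL : ∀ (j : ℤ) (z k : G), z ∈ g ^ j • (L ∪ B) → k ∈ K →
      z * k ∉ g ^ j • (L ∪ B) → z ∈ g ^ j • B := by
    intro j z k hz hk hzk
    have hw : g ^ (-j) * z ∈ L ∪ B := (hmem j _ z).mp hz
    have hwk : g ^ (-j) * (z * k) ∉ L ∪ B := fun h => hzk ((hmem j _ _).mpr h)
    have hwk2 : (g ^ (-j) * z) * k ∉ L ∪ B := by rwa [mul_assoc]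
    have hwkR : (g ^ (-j) * z) * k ∈ R := by
      rcases htri ((g ^ (-j) * z) * k) with h | h | h
      · exact absurd (Or.inr h) hwk2
      · exact absurd (Or.inl h) hwk2
      · exact h
    rcases hw with hwL | hwB
    · exact (aux_no_cross_LR hLR hsep hwL hk hwkR).elim
    · exact (hmem j B z).mpr hwB
  have hexitR : ∀ (j : ℤ) (z k : G), z ∈ g ^ j • (R ∪ B) → k ∈ K →
      z * k ∉ g ^ j • (R ∪ B) → z ∈ g ^ j • B := by
    intro j z k hz hk hzk
    have hw : g ^ (-j) * z ∈ R ∪ B := (hmem j _ z).mp hz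
    have hwk : g ^ (-j) * (z * k) ∉ R ∪ B := fun h => hzk ((hmem j _ _).mpr h)
    have hwk2 : (g ^ (-j) * z) * k ∉ R ∪ B := by rwa [mul_assoc]
    have hwkL : (g ^ (-j) * z) * k ∈ L := by
      rcases htri ((g ^ (-j) * z) * k) with h | h | h
      · exact absurd (Or.inr h) hwk2
      · exact h
      · exact absurd (Or.inl h) hwk2
    rcases hw with hwR | hwB
    · exact (aux_no_cross_RL hLR hKsymm hsep hwR hk hwkL).elim
    · exact (hmem j B z).mpr hwB
  -- no point lies in all forward translates of L ∪ B
  have hX : ∀ z : G, ∃ j : ℕ, z ∉ g ^ (j:ℤ) • (L ∪ B) := by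
    intro z
    by_contra h
    push_neg at h
    obtain ⟨T, hT⟩ := hword (z⁻¹ * y₀)
    obtain ⟨p, hp0, hpT, hstep⟩ := aux_word_seq T _ hT z
    rw [mul_inv_cancel_left] at hpT
    have htarget : ∀ j : ℕ, y₀ ∉ g ^ (j:ℤ) • (L ∪ B) := by
      intro j hy
      obtain ⟨w, hwLB, hwy⟩ := Set.mem_smul_set.mp hy
      rcases Nat.eq_zero_or_pos j with h0 | hpos
      · subst h0
        simp only [Nat.cast_zero, zpow_zero, one_smul] at hwy
        subst hwy
        rcases hwLB with h' | h'
        · exact hLRf _ h' hy₀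
        · exact hRB _ hy₀ h'
      · have : g ^ (j:ℤ) * w ∈ L := hiterLZ (j:ℤ) (by exact_mod_cast hpos) w hwLB
        rw [smul_eq_mul] at hwy
        rw [hwy] at this
        exact hLRf _ this hy₀
    have hsel : ∀ j : ℕ, ∃ i, i < T ∧ p i ∈ g ^ (j:ℤ) • B := by
      intro j
      obtain ⟨i, hiT, hin, hout⟩ :=
        aux_ivt_seq T p (g ^ (j:ℤ) • (L ∪ B)) (hp0 ▸ h j) (hpT ▸ htarget j)
      refine ⟨i, hiT, ?_⟩
      have hk := hstep i hiT
      have hpi1 : p (i+1) = p i * ((p i)⁻¹ * p (i+1)) := (mul_inv_cancel_left _ _).symm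
      exact hexitL (j:ℤ) (p i) _ hin hk (by rw [← hpi1]; exact hout)
    let f : ℕ → ℕ := fun j => (hsel j).choose
    have hf : ∀ j : ℕ, f j < T ∧ p (f j) ∈ g ^ (j:ℤ) • B := fun j => (hsel j).choose_spec
    have hinj : Set.InjOn f (Finset.range (T+1)) := by
      intro a _ b _ hab
      by_contra hne
      rcases lt_or_gt_of_ne hne with h' | h'
      · exact hwall a b (by exact_mod_cast h') (p (f a)) (hf a).2 (hab ▸ (hf b).2)
      · exact hwall b a (by exact_mod_cast h') (p (f b)) (hf b).2 (hab ▸ (hf a).2)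
    have hmaps : ∀ a ∈ Finset.range (T+1), f a ∈ Finset.range T :=
      fun a _ => Finset.mem_range.mpr (hf a).1
    have hcard := Finset.card_le_card_of_injOn f hmaps hinj
    simp only [Finset.card_range] at hcard
    omega
  -- no point lies in all backward translates of R ∪ B
  have hY : ∀ z : G, ∃ j : ℕ, z ∉ g ^ (-(j:ℤ)) • (R ∪ B) := by
    intro z
    by_contra h
    push_neg at h
    obtain ⟨T, hT⟩ := hword (z⁻¹ * x₀)
    obtain ⟨p, hp0, hpT, hstep⟩ := aux_word_seq T _ hT z
    rw [mul_inv_cancel_left] at hpT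
    have htarget : ∀ j : ℕ, x₀ ∉ g ^ (-(j:ℤ)) • (R ∪ B) := by
      intro j hy
      obtain ⟨w, hwRB, hwy⟩ := Set.mem_smul_set.mp hy
      rcases Nat.eq_zero_or_pos j with h0 | hpos
      · subst h0
        simp only [Nat.cast_zero, neg_zero, zpow_zero, one_smul] at hwy
        subst hwy
        rcases hwRB with h' | h'
        · exact hLRf _ hx₀ h'
        · exact hLB _ hx₀ h'
      · have : g ^ (-(j:ℤ)) * w ∈ R := hiterRZ (-(j:ℤ)) (by omega) w hwRB
        rw [smul_eq_mul] at hwy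
        rw [hwy] at this
        exact hLRf _ hx₀ this
    have hsel : ∀ j : ℕ, ∃ i, i < T ∧ p i ∈ g ^ (-(j:ℤ)) • B := by
      intro j
      obtain ⟨i, hiT, hin, hout⟩ :=
        aux_ivt_seq T p (g ^ (-(j:ℤ)) • (R ∪ B)) (hp0 ▸ h j) (hpT ▸ htarget j)
      refine ⟨i, hiT, ?_⟩
      have hk := hstep i hiT
      have hpi1 : p (i+1) = p i * ((p i)⁻¹ * p (i+1)) := (mul_inv_cancel_left _ _).symm
      exact hexitR (-(j:ℤ)) (p i) _ hin hk (by rw [← hpi1]; exact hout)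
    let f : ℕ → ℕ := fun j => (hsel j).choose
    have hf : ∀ j : ℕ, f j < T ∧ p (f j) ∈ g ^ (-(j:ℤ)) • B := fun j => (hsel j).choose_spec
    have hinj : Set.InjOn f (Finset.range (T+1)) := by
      intro a _ b _ hab
      by_contra hne
      rcases lt_or_gt_of_ne hne with h' | h'
      · exact hwall (-(b:ℤ)) (-(a:ℤ)) (by exact_mod_cast (by omega : -(b:ℤ) < -(a:ℤ)))
          (p (f a)) (hab ▸ (hf b).2) (hf a).2
      · exact hwall (-(a:ℤ)) (-(b:ℤ)) (by omega)
          (p (f b)) (hab ▸ (hf a).2) (hf b).2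
    have hmaps : ∀ a ∈ Finset.range (T+1), f a ∈ Finset.range T :=
      fun a _ => Finset.mem_range.mpr (hf a).1
    have hcard := Finset.card_le_card_of_injOn f hmaps hinj
    simp only [Finset.card_range] at hcard
    omega
  -- monotonicity of the translates
  have hLBstable : ∀ m : ℤ, 0 ≤ m → ∀ w ∈ L ∪ B, g ^ m * w ∈ L ∪ B := by
    intro m hm w hw
    rcases eq_or_lt_of_le hm with h0 | hpos
    · rw [← h0]; simpa using hw
    · exact Or.inl (hiterLZ m (by omega) w hw)
  have hmono : ∀ i j : ℤ, i ≤ j → g ^ j • (L ∪ B) ⊆ g ^ i • (L ∪ B) := by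
    intro i j hij z hz
    have h1 : g ^ (-j) * z ∈ L ∪ B := (hmem j _ z).mp hz
    refine (hmem i _ z).mpr ?_
    have heq : g ^ (-i) * z = g ^ (j - i) * (g ^ (-j) * z) := by
      rw [← mul_assoc, ← zpow_add]
      congr 2
      omega
    rw [heq]
    exact hLBstable (j - i) (by omega) _ h1
  -- the covering
  have hcover : ∀ z : G, ∃ (m : ℤ) (w : G), w ∈ (L ∪ B) \ (g • (L ∪ B)) ∧ z = g ^ m * w := by
    intro z
    have hbdd : ∃ b : ℤ, ∀ m : ℤ, z ∈ g ^ m • (L ∪ B) → m ≤ b := by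
      obtain ⟨j₀, hj₀⟩ := hX z
      refine ⟨(j₀:ℤ), fun m hm => ?_⟩
      by_contra hgt
      push_neg at hgt
      exact hj₀ (hmono (j₀:ℤ) m (by omega) hm)
    have hinh : ∃ m : ℤ, z ∈ g ^ m • (L ∪ B) := by
      obtain ⟨j, hj⟩ := hY z
      refine ⟨-(j:ℤ), ?_⟩
      refine (hmem _ _ z).mpr ?_
      rcases htri (g ^ (-(-(j:ℤ))) * z) with h | h | h
      · exact Or.inr h
      · exact Or.inl h
      · exfalso
        exact hj ((hmem _ _ z).mpr (Or.inl h))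
    obtain ⟨m, hPm, hmax⟩ := Int.exists_greatest_of_bdd hbdd hinh
    obtain ⟨w, hwLB, hwz⟩ := Set.mem_smul_set.mp hPm
    rw [smul_eq_mul] at hwz
    refine ⟨m, w, ⟨hwLB, fun hwg => ?_⟩, hwz.symm⟩
    have : z ∈ g ^ (m+1) • (L ∪ B) := by
      obtain ⟨v, hv, hvw⟩ := Set.mem_smul_set.mp hwg
      rw [smul_eq_mul] at hvw
      refine Set.mem_smul_set.mpr ⟨v, hv, ?_⟩
      rw [smul_eq_mul, zpow_add_one, mul_assoc, hvw, hwz]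
    have := hmax (m+1) this
    omega
  -- conclusion
  have hC0 : (L ∪ B) \ (g • (L ∪ B)) ∈ ℬ := by
    have hsub : (L ∪ B) \ (g • (L ∪ B)) ⊆ ((L \ (g • L)) ∪ ((g • L) \ L)) ∪ B := by
      rintro w ⟨hw, hnot⟩
      rcases hw with hwL | hwB
      · exact Or.inl (Or.inl ⟨hwL, fun hgL =>
          hnot (Set.smul_set_mono Set.subset_union_left hgL)⟩)
      · exact Or.inr hwB
    exact hsubset _ _ hsub (hunion _ (htrivL g) _ hB)
  refine ⟨g, ((L ∪ B) \ (g • (L ∪ B)))⁻¹, hinv _ hC0, ?_⟩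
  ext z
  simp only [Set.mem_univ, iff_true]
  obtain ⟨m, w, hwC, hzw⟩ := hcover z⁻¹
  have hz : z = w⁻¹ * g ^ (-m) := by
    rw [← inv_inv z, hzw, mul_inv_rev, zpow_neg]
  refine Set.mem_mul.mpr ⟨w⁻¹, ?_, g ^ (-m), ?_, hz.symm⟩
  · rw [Set.mem_inv, inv_inv]
    exact hwC
  · exact SetLike.mem_coe.mpr (Subgroup.zpow_mem_zpowers g (-m))
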